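/- Let u = w t^s and v = x t^r be elements of G = Z^n ⋊_φ Z in normal form. If u and v are conjugate in G, then s = r, and there exists e ∈ Z such that φ^e(w) and x are twisted conjugate by φ^s in Z^n, i.e., there exists b ∈ Z^n with x = b + φ^e(w) − φ^s(b). -/

import Mathlib

open Matrix

def mAut {n : ℕ} (M : (Matrix (Fin n) (Fin n) ℤ)ˣ) : (Fin n → ℤ) ≃+ (Fin n → ℤ) where
  toFun v := (M : Matrix (Fin n) (Fin n) ℤ) *ᵥ v
  invFun v := (↑M⁻¹ : Matrix (Fin n) (Fin n) ℤ) *ᵥ v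
  left_inv v := by simp [Matrix.mulVec_mulVec]
  right_inv v := by simp [Matrix.mulVec_mulVec]
  map_add' u v := by simp [Matrix.mulVec_add]

def tAct {n : ℕ} (M : (Matrix (Fin n) (Fin n) ℤ)ˣ) :
    Multiplicative ℤ →* MulAut (Multiplicative (Fin n → ℤ)) :=
  zpowersHom _ (AddEquiv.toMultiplicative (mAut M))

abbrev G (n : ℕ) (M : (Matrix (Fin n) (Fin n) ℤ)ˣ) :=
  SemidirectProduct (Multiplicative (Fin n → ℤ)) (Multiplicative ℤ) (tAct M)

def nf {n : ℕ} (M : (Matrix (Fin n) (Fin n) ℤ)ˣ) (w : Fin n → ℤ) (k : ℤ) : G n M :=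
  SemidirectProduct.inl (Multiplicative.ofAdd w) * SemidirectProduct.inr (Multiplicative.ofAdd k)

lemma tAct_apply {n : ℕ} (M : (Matrix (Fin n) (Fin n) ℤ)ˣ) (k : ℤ) (a : Fin n → ℤ) :
    tAct M (Multiplicative.ofAdd k) (Multiplicative.ofAdd a)
      = Multiplicative.ofAdd ((↑(M ^ k) : Matrix (Fin n) (Fin n) ℤ) *ᵥ a) := by
  have hz : ∀ j : ℤ, tAct M (Multiplicative.ofAdd j)
      = (AddEquiv.toMultiplicative (mAut M)) ^ j := by
    intro j; simp [tAct, zpowersHom_apply]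
  rw [hz]
  induction k using Int.induction_on generalizing a with
  | zero => simp
  | succ k ih =>
      rw [_root_.zpow_add_one, MulAut.mul_apply]
      have h1 : (AddEquiv.toMultiplicative (mAut M)) (Multiplicative.ofAdd a)
          = Multiplicative.ofAdd ((↑M : Matrix (Fin n) (Fin n) ℤ) *ᵥ a) := rfl
      rw [h1, ih]
      simp [mulVec_mulVec, _root_.zpow_add_one]
  | pred k ih =>
      rw [_root_.zpow_sub_one, MulAut.mul_apply]
      have h1 : ((AddEquiv.toMultiplicative (mAut M))⁻¹ : MulAut (Multiplicative (Fin n → ℤ)))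
          (Multiplicative.ofAdd a)
          = Multiplicative.ofAdd ((↑(M⁻¹) : Matrix (Fin n) (Fin n) ℤ) *ᵥ a) := rfl
      rw [h1, ih]
      simp [mulVec_mulVec, _root_.zpow_sub_one]

/-- If u = w t^s and v = x t^r are conjugate in G, then s = r and φ^e(w) ∼_{φ^s} x for some e. -/
theorem conj_imp_twisted {n : ℕ} (M : (Matrix (Fin n) (Fin n) ℤ)ˣ)
    (w x : Fin n → ℤ) (s r : ℤ) (h : IsConj (nf M w s) (nf M x r)) :
    s = r ∧ ∃ e : ℤ, ∃ b : Fin n → ℤ,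
      x = b + (↑(M ^ e) : Matrix (Fin n) (Fin n) ℤ) *ᵥ w
            - (↑(M ^ s) : Matrix (Fin n) (Fin n) ℤ) *ᵥ b := by
  obtain ⟨c, hc⟩ := h
  have hc' : (↑c : G n M) * nf M w s = nf M x r * ↑c := hc
  set u : G n M := ↑c
  have hleftw : (nf M w s).left = Multiplicative.ofAdd w := by
    simp [nf, SemidirectProduct.mul_left]
  have hrightw : (nf M w s).right = Multiplicative.ofAdd s := by
    simp [nf]
  have hleftx : (nf M x r).left = Multiplicative.ofAdd x := by
    simp [nf, SemidirectProduct.mul_left]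
  have hrightx : (nf M x r).right = Multiplicative.ofAdd r := by
    simp [nf]
  have hr : u.right * (nf M w s).right = (nf M x r).right * u.right := by
    rw [← SemidirectProduct.mul_right, ← SemidirectProduct.mul_right, hc']
  rw [hrightw, hrightx] at hr
  have hsr : s = r := by
    have := congrArg Multiplicative.toAdd hr
    simp only [toAdd_mul, toAdd_ofAdd] at this
    omega
  have hl : u.left * tAct M u.right (nf M w s).left
      = (nf M x r).left * tAct M (nf M x r).right u.left := by
    rw [← SemidirectProduct.mul_left, ← SemidirectProduct.mul_left, hc']
  set e : ℤ := Multiplicative.toAdd u.right with he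
  set b : Fin n → ℤ := Multiplicative.toAdd u.left with hb
  have hue : u.right = Multiplicative.ofAdd e := rfl
  have hub : u.left = Multiplicative.ofAdd b := rfl
  rw [hleftw, hleftx, hrightx, hue, hub, tAct_apply, tAct_apply] at hl
  have hl' := congrArg Multiplicative.toAdd hl
  simp only [toAdd_mul, toAdd_ofAdd] at hl'
  refine ⟨hsr, e, b, ?_⟩
  rw [hsr]
  exact eq_sub_iff_add_eq.mpr hl'.symm
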